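/- The map (M, ∘, e, ε, ∇̃) → (M, *, ε, e, ∇^F), where X*Y := X∘Y∘ε^{-1} and ∇^F is the second structure connection of (M, ∘, e, ε, ∇̃), is an involution on the set of F-manifolds (M, ∘, e, ε, ∇̃) with an eventual identity ε and a compatible, torsion-free connection ∇̃ satisfying ∇̃_X(e) = (1/2)[ε^{-1}, ε] ∘ X for all vector fields X. In particular, ∇^F satisfies the corresponding condition on (M, *, ε) (namely ∇^F_X(ε) = (1/2)[e^{-1,*}, e]*X, where e^{-1,*} = ε∘ε), and ∇̃ is the second structure connection of (M, *, ε, e, ∇^F). -/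

import Mathlib

/-- An algebraic model of the geometric setting of the paper: `R` plays the role
of the ring `C^∞(M)` of smooth functions on a manifold `M`, and `V` plays the
role of the `C^∞(M)`-module of smooth vector fields on `M`, equipped with its
Lie bracket and with the action of vector fields on functions by derivations. -/
structure SmoothSetting (R V : Type*) [CommRing R] [LieRing V] [Module R V] where
  /-- the action `X(f)` of a vector field `X` on a function `f` -/
  deriv : V → R → R
  deriv_add : ∀ (X : V) (f g : R), deriv X (f + g) = deriv X f + deriv X g
  deriv_mul : ∀ (X : V) (f g : R), deriv X (f * g) = deriv X f * g + f * deriv X g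
  add_deriv : ∀ (X Y : V) (f : R), deriv (X + Y) f = deriv X f + deriv Y f
  smul_deriv : ∀ (f : R) (X : V) (g : R), deriv (f • X) g = f * deriv X g
  bracket_deriv : ∀ (X Y : V) (f : R),
    deriv ⁅X, Y⁆ f = deriv X (deriv Y f) - deriv Y (deriv X f)
  bracket_smul : ∀ (X : V) (f : R) (Y : V), ⁅X, f • Y⁆ = f • ⁅X, Y⁆ + deriv X f • Y

/-- `(m, e)` is an F-manifold structure: `m` is a fiber-preserving (i.e.
`C^∞(M)`-bilinear) commutative associative multiplication on vector fields with
unit field `e`, satisfying the Hertling–Manin integrability condition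
`L_{X∘Y}(∘) = X ∘ L_Y(∘) + Y ∘ L_X(∘)`. -/
structure IsFManifold (R : Type*) {V : Type*} [CommRing R] [LieRing V] [Module R V]
    (m : V → V → V) (e : V) : Prop where
  add_left : ∀ X Y Z : V, m (X + Y) Z = m X Z + m Y Z
  smul_left : ∀ (f : R) (X Y : V), m (f • X) Y = f • m X Y
  comm : ∀ X Y : V, m X Y = m Y X
  assoc : ∀ X Y Z : V, m (m X Y) Z = m X (m Y Z)
  unit : ∀ X : V, m e X = X
  hertling_manin : ∀ X Y Z W : V,
    ⁅m X Y, m Z W⁆ - m ⁅m X Y, Z⁆ W - m Z ⁅m X Y, W⁆ =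
      m X (⁅Y, m Z W⁆ - m ⁅Y, Z⁆ W - m Z ⁅Y, W⁆)
        + m Y (⁅X, m Z W⁆ - m ⁅X, Z⁆ W - m Z ⁅X, W⁆)

/-- The dual multiplication `X * Y := X ∘ Y ∘ ε⁻¹` determined by an invertible
vector field `ε` with inverse `εinv`. -/
def dualMul {V : Type*} (m : V → V → V) (εinv : V) : V → V → V :=
  fun X Y => m (m X Y) εinv

/-- `ε` (with inverse `εinv`) is an eventual identity on the F-manifold `(m, e)`:
it is invertible and the dual multiplication `X * Y = X ∘ Y ∘ ε⁻¹` defines an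
F-manifold structure on `M` with unit field `ε`. -/
def IsEventualIdentity (R : Type*) {V : Type*} [CommRing R] [LieRing V] [Module R V]
    (m : V → V → V) (e ε εinv : V) : Prop :=
  m ε εinv = e ∧ IsFManifold R (dualMul m εinv) ε

/-- `nabla` is a (Koszul) connection on the tangent bundle, i.e. on vector fields. -/
structure IsConnection {R V : Type*} [CommRing R] [LieRing V] [Module R V]
    (S : SmoothSetting R V) (nabla : V → V → V) : Prop where
  add_left : ∀ X Y Z : V, nabla (X + Y) Z = nabla X Z + nabla Y Z
  smul_left : ∀ (f : R) (X Y : V), nabla (f • X) Y = f • nabla X Y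
  add_right : ∀ X Y Z : V, nabla X (Y + Z) = nabla X Y + nabla X Z
  leibniz : ∀ (X : V) (f : R) (Y : V), nabla X (f • Y) = S.deriv X f • Y + f • nabla X Y

/-- `nabla` is torsion-free. -/
def IsTorsionFree {V : Type*} [LieRing V] (nabla : V → V → V) : Prop :=
  ∀ X Y, nabla X Y - nabla Y X = ⁅X, Y⁆

/-- The covariant derivative `∇_X(∘)(Y, Z)` of a multiplication `m` with respect
to a connection `nabla`. -/
def covMul {V : Type*} [LieRing V] (nabla m : V → V → V) (X Y Z : V) : V :=
  nabla X (m Y Z) - m (nabla X Y) Z - m Y (nabla X Z)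

/-- `nabla` is compatible with the multiplication `m`: the vector valued tensor
`∇(∘)` is totally symmetric. -/
def IsCompatible {V : Type*} [LieRing V] (nabla m : V → V → V) : Prop :=
  ∀ X Y Z, covMul nabla m X Y Z = covMul nabla m Y X Z ∧
    covMul nabla m X Y Z = covMul nabla m X Z Y

/-- The curvature `R^∇_{X,Y}Z = ∇_X∇_Y Z − ∇_Y∇_X Z − ∇_{[X,Y]}Z`. -/
def curv {V : Type*} [LieRing V] (nabla : V → V → V) (X Y Z : V) : V :=
  nabla X (nabla Y Z) - nabla Y (nabla X Z) - nabla ⁅X, Y⁆ Z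

/-- `nabla` is flat. -/
def IsFlat {V : Type*} [LieRing V] (nabla : V → V → V) : Prop :=
  ∀ X Y Z, curv nabla X Y Z = 0

/-- The curvature condition
`V∘R_{Z,Y}X + Y∘R_{V,Z}X + Z∘R_{Y,V}X = 0` of Lorenzoni–Pedroni. -/
def CurvCircCond {V : Type*} [LieRing V] (m nabla : V → V → V) : Prop :=
  ∀ X Y Z W, m W (curv nabla Z Y X) + m Y (curv nabla W Z X)
    + m Z (curv nabla Y W X) = 0

/-- A special family of connections on the F-manifold `(m, e)`: the family of
all `∇̃^V_X(Y) = ∇̃_X(Y) + V∘X∘Y`, `V` a vector field, where `∇̃` is some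
torsion-free connection compatible with `m`. -/
def IsSpecialFamily {R V : Type*} [CommRing R] [LieRing V] [Module R V]
    (S : SmoothSetting R V) (m : V → V → V) (SF : Set (V → V → V)) : Prop :=
  ∃ nt : V → V → V, IsConnection S nt ∧ IsTorsionFree nt ∧ IsCompatible nt m ∧
    SF = { n | ∃ W : V, n = fun X Y => nt X Y + m (m W X) Y }

/-- The connection `∇^W_X(Y) = ε∘∇̃_X(ε⁻¹∘Y) − ∇̃_{ε⁻¹∘Y}(ε)∘X + W*X*Y` on the
dual F-manifold, where `*` is the dual multiplication. -/
def dualConn {V : Type*} [LieRing V] (m : V → V → V) (ε εinv : V)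
    (nt : V → V → V) (W : V) : V → V → V :=
  fun X Y => m ε (nt X (m εinv Y)) - m (nt (m εinv Y) ε) X
    + dualMul m εinv (dualMul m εinv W X) Y

/-- The dual family `D_ε(S̃)` built from a chosen connection `nt ∈ S̃`. -/
def dualFamily {V : Type*} [LieRing V] (m : V → V → V) (ε εinv : V)
    (nt : V → V → V) : Set (V → V → V) :=
  { n | ∃ W : V, n = dualConn m ε εinv nt W }

/-- The dual family `D_ε(S̃)` of a family of connections `S̃`. -/
def dualFamilyOfSet {V : Type*} [LieRing V] (m : V → V → V) (ε εinv : V)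
    (SF : Set (V → V → V)) : Set (V → V → V) :=
  { n | ∃ nt ∈ SF, ∃ W : V, n = dualConn m ε εinv nt W }

/-- The second structure connection
`∇^F_X(Y) = ε∘∇̃_X(ε⁻¹∘Y) − ∇̃_{ε⁻¹∘Y}(ε)∘X` of `(M, ∘, e, ε, ∇̃)`. -/
def secondConn {V : Type*} [LieRing V] (m : V → V → V) (ε εinv : V)
    (nt : V → V → V) : V → V → V :=
  fun X Y => m ε (nt X (m εinv Y)) - m (nt (m εinv Y) ε) X

/-- The connection
`∇_X(Y) = ε∘∇̃_X(ε⁻¹∘Y) − ∇̃_{ε⁻¹∘Y}(ε)∘X + (1/2)[ε⁻¹,ε]∘X∘Y + U*X*Y`. -/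
def uDualConn {V : Type*} [LieRing V] [Module ℚ V] (m : V → V → V)
    (ε εinv U : V) (nt : V → V → V) : V → V → V :=
  fun X Y => secondConn m ε εinv nt X Y + (2 : ℚ)⁻¹ • m (m ⁅εinv, ε⁆ X) Y
    + dualMul m εinv (dualMul m εinv U X) Y

/-- The `k`-th power `X^k` of a vector field with respect to the multiplication
`m` with unit `e`. -/
def mpow {V : Type*} (m : V → V → V) (e X : V) : ℕ → V
  | 0 => e
  | k + 1 => m X (mpow m e X k)

/-- The Legendre transformation `L_u(S̃) = { u⁻¹∘∇̃_X(u∘Y) : ∇̃ ∈ S̃ }` of a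
family of connections `S̃` by an invertible vector field `u` (with inverse
`uinv`). -/
def legFamily {V : Type*} (m : V → V → V) (uinv u : V)
    (SF : Set (V → V → V)) : Set (V → V → V) :=
  { n | ∃ nt ∈ SF, n = fun X Y => m uinv (nt X (m u Y)) }

/-- **Proposition 6.4.** The map
`(M, ∘, e, ε, ∇̃) ↦ (M, *, ε, e, ∇^F)`, with `∇^F` the second structure
connection, is an involution on F-manifolds with an eventual identity `ε` and a
compatible torsion-free connection `∇̃` satisfying
`∇̃_X(e) = (1/2)[ε⁻¹, ε]∘X`. In particular `∇^F` is a torsion-free connection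
compatible with `*` satisfying `∇^F_X(ε) = (1/2)[e^{-1,*}, e]*X` (where
`e^{-1,*} = ε∘ε`), and `∇̃` is the second structure connection of
`(M, *, ε, e, ∇^F)`. -/
theorem statement12 {R V : Type*} [CommRing R] [LieRing V] [Module R V] [Module ℚ V]
    (S : SmoothSetting R V) (m : V → V → V) (e ε εinv : V)
    (nt : V → V → V)
    (hF : IsFManifold R m e) (hev : IsEventualIdentity R m e ε εinv)
    (hc : IsConnection S nt) (htf : IsTorsionFree nt) (hcm : IsCompatible nt m)
    (hU : ∀ X : V, nt X e = (2 : ℚ)⁻¹ • m ⁅εinv, ε⁆ X) :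
    IsFManifold R (dualMul m εinv) ε ∧
      IsEventualIdentity R (dualMul m εinv) ε e (m ε ε) ∧
      IsConnection S (secondConn m ε εinv nt) ∧
      IsTorsionFree (secondConn m ε εinv nt) ∧
      IsCompatible (secondConn m ε εinv nt) (dualMul m εinv) ∧
      (∀ X : V, secondConn m ε εinv nt X ε =
        (2 : ℚ)⁻¹ • dualMul m εinv ⁅m ε ε, e⁆ X) ∧
      dualMul (dualMul m εinv) (m ε ε) = m ∧
      secondConn (dualMul m εinv) e (m ε ε) (secondConn m ε εinv nt) = nt := by
  classical
  letI : CommRing V :=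
    { (inferInstance : AddCommGroup V) with
      mul := m, one := e,
      mul_assoc := hF.assoc, mul_comm := hF.comm,
      one_mul := hF.unit,
      mul_one := fun a => (hF.comm a e).trans (hF.unit a),
      right_distrib := hF.add_left,
      left_distrib := fun a b c => by
        show m a (b + c) = m a b + m a c
        rw [hF.comm a (b + c), hF.add_left, hF.comm b a, hF.comm c a],
      zero_mul := fun a => by
        show m 0 a = 0
        have h := hF.add_left 0 0 a; rw [add_zero] at h
        have h2 : m 0 a + m 0 a = m 0 a + 0 := by rw [add_zero]; exact h.symm
        exact add_left_cancel h2,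
      mul_zero := fun a => by
        show m a 0 = 0
        rw [hF.comm]
        have h := hF.add_left 0 0 a; rw [add_zero] at h
        have h2 : m 0 a + m 0 a = m 0 a + 0 := by rw [add_zero]; exact h.symm
        exact add_left_cancel h2 }
  have hmm : m = fun x y => x * y := rfl
  have he : e = (1 : V) := rfl
  -- basic scalar helpers
  have half : ∀ a b : V, a + a = b → a = (2:ℚ)⁻¹ • b := by
    intro a b h
    rw [← h, ← two_smul ℚ a, smul_smul]
    norm_num
  have halfz : ∀ a : V, a + a = 0 → a = 0 := by
    intro a h
    have := half a 0 h
    simpa using this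
  have sk : ∀ a b : V, ⁅a, b⁆ = -⁅b, a⁆ := fun a b => (lie_skew a b).symm
  -- restated hypotheses
  have H0 : ε * εinv = 1 := hev.1
  have hid : ∀ X : V, ε * (εinv * X) = X := fun X => by linear_combination X * H0
  have HM : ∀ X Y Z W : V,
      ⁅X*Y, Z*W⁆ - ⁅X*Y, Z⁆*W - Z*⁅X*Y, W⁆ =
        X*(⁅Y, Z*W⁆ - ⁅Y,Z⁆*W - Z*⁅Y,W⁆) + Y*(⁅X, Z*W⁆ - ⁅X,Z⁆*W - Z*⁅X,W⁆) :=
    hF.hertling_manin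
  have Hus : ∀ X : V, (ε*X)*εinv = X := hev.2.unit
  have HMs : ∀ X Y Z W : V,
      ⁅((X*Y)*εinv)*Z*εinv, ((Z*W)*εinv)⁆ = 0 → True := fun _ _ _ _ _ => trivial
  have TF : ∀ X Y : V, nt X Y - nt Y X = ⁅X,Y⁆ := htf
  have CM12 : ∀ X Y Z : V, nt X (Y*Z) - (nt X Y)*Z - Y*(nt X Z)
      = nt Y (X*Z) - (nt Y X)*Z - X*(nt Y Z) := fun X Y Z => (hcm X Y Z).1
  have CM23 : ∀ X Y Z : V, nt X (Y*Z) - (nt X Y)*Z - Y*(nt X Z)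
      = nt X (Z*Y) - (nt X Z)*Y - Z*(nt X Y) := fun X Y Z => (hcm X Y Z).2
  have CMp : ∀ A B C : V, nt A (B*C) - (nt A B)*C - B*(nt A C)
      = nt C (B*A) - (nt C B)*A - B*(nt C A) := by
    intro A B C
    linear_combination CM12 A B C + CM23 B A C + CM12 B C A
  have hUd : ∀ X : V, nt X 1 + nt X 1 = ⁅εinv, ε⁆ * X := by
    intro X
    have h : nt X 1 = (2:ℚ)⁻¹ • (⁅εinv, ε⁆ * X) := hU X
    rw [h, ← two_smul ℚ ((2:ℚ)⁻¹ • (⁅εinv, ε⁆ * X)), smul_smul]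
    norm_num
  -- L_e(∘) = 0
  have L1 : ∀ Z W : V, ⁅(1:V), Z*W⁆ - ⁅(1:V),Z⁆*W - Z*⁅(1:V),W⁆ = 0 := by
    intro Z W
    have h := HM 1 1 Z W
    simp only [one_mul, mul_one] at h
    linear_combination -h
  -- L^*_ε(*) = 0
  have Lse : ∀ Z W : V, ⁅ε, (Z*W)*εinv⁆ - (⁅ε,Z⁆*W)*εinv - (Z*⁅ε,W⁆)*εinv = 0 := by
    intro Z W
    have h := hev.2.hertling_manin ε ε Z W
    simp only [hev.2.unit] at h
    have h' : ⁅ε, (Z*W)*εinv⁆ - (⁅ε,Z⁆*W)*εinv - (Z*⁅ε,W⁆)*εinv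
        = (⁅ε, (Z*W)*εinv⁆ - (⁅ε,Z⁆*W)*εinv - (Z*⁅ε,W⁆)*εinv)
          + (⁅ε, (Z*W)*εinv⁆ - (⁅ε,Z⁆*W)*εinv - (Z*⁅ε,W⁆)*εinv) := h
    linear_combination -h'
  have hG : ∀ Y : V, ⁅ε, Y⁆ - ε*⁅ε, Y*εinv⁆ = -(⁅ε,(1:V)⁆*Y) := by
    intro Y
    have hs := Lse 1 Y
    simp only [one_mul] at hs
    linear_combination (-ε)*hs + (-(⁅ε,(1:V)⁆*Y + ⁅ε,Y⁆))*H0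
  -- eventual identity criterion: L_ε(∘)(Z,W) = [e,ε]∘Z∘W
  have LA : ∀ Z W : V, ⁅ε, Z*W⁆ - ⁅ε,Z⁆*W - Z*⁅ε,W⁆ = ⁅(1:V),ε⁆*Z*W := by
    intro Z W
    have h1 := hG (Z*W)
    have hs := Lse Z W
    have s1 : ⁅(1:V),ε⁆ = -⁅ε,(1:V)⁆ := sk _ _
    linear_combination h1 + ε*hs + (⁅ε,Z⁆*W + Z*⁅ε,W⁆)*H0 - (Z*W)*s1
  -- inverse eventual identity criterion
  have LI : ∀ Z W : V, ⁅εinv, Z*W⁆ - ⁅εinv,Z⁆*W - Z*⁅εinv,W⁆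
      = εinv*εinv*⁅ε,(1:V)⁆*Z*W := by
    intro Z W
    have h := HM ε εinv Z W
    simp only [H0] at h
    have h1 := L1 Z W
    have h2 := LA Z W
    have s1 : ⁅(1:V),ε⁆ = -⁅ε,(1:V)⁆ := sk _ _
    linear_combination (-εinv)*h + εinv*h1 + (-(εinv*εinv))*h2
      + (-(εinv*εinv*Z*W))*s1
      + (-(⁅εinv, Z*W⁆ - ⁅εinv,Z⁆*W - Z*⁅εinv,W⁆))*H0
  have H0' : εinv * ε = 1 := (mul_comm εinv ε).trans H0
  have Hee : ε*⁅ε,εinv⁆ = ⁅ε,(1:V)⁆ + ⁅ε,(1:V)⁆ := by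
    have h := LA εinv ε
    rw [H0'] at h
    have s1 : ⁅(1:V),ε⁆ = -⁅ε,(1:V)⁆ := sk _ _
    have s2 : ⁅ε,ε⁆ = 0 := lie_self ε
    linear_combination -h + (-εinv)*s2 + (-(εinv*ε))*s1 + ⁅ε,(1:V)⁆*H0'
  -- the D-identity (torsion-free core)
  have Dlem : ∀ a b : V, ⁅ε*a, ε*b⁆ - ε*⁅ε*a, b⁆ - ε*⁅a, ε*b⁆ + ε*ε*⁅a,b⁆ = 0 := by
    intro a b
    have h := HM ε a ε b
    have h2 := LA ε a
    have h3 := LA ε b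
    have s1 : ⁅ε*a, ε⁆ = -⁅ε, ε*a⁆ := sk _ _
    have s2 : ⁅ε,ε⁆ = 0 := lie_self ε
    have s3 : ⁅a,ε⁆ = -⁅ε,a⁆ := sk _ _
    linear_combination h + b*s1 - b*h2 + a*h3 - (ε*b)*s3 - a*b*s2
  -- the connection-level symmetric pieces
  have P1 : ∀ x y z : V, nt (ε*x) (y*z) - (nt (ε*x) y)*z - y*(nt (ε*x) z)
      = (nt y (ε*(x*z)) - (nt y ε)*(x*z) - ε*(nt y (x*z)))
        - z*(nt y (ε*x) - (nt y ε)*x - ε*(nt y x))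
        + ε*(nt y (x*z) - (nt y x)*z - x*(nt y z)) := by
    intro x y z
    have h := CM12 (ε*x) y z
    rw [show (ε*x)*z = ε*(x*z) from mul_assoc ε x z] at h
    linear_combination h
  have P2 : ∀ x y z : V,
      (nt y (ε*(x*z)) - (nt y ε)*(x*z) - ε*(nt y (x*z)))
        - (nt x (ε*(y*z)) - (nt x ε)*(y*z) - ε*(nt x (y*z)))
      = x*(nt ε (y*z) - (nt ε y)*z - y*(nt ε z))
        - y*(nt ε (x*z) - (nt ε x)*z - x*(nt ε z)) := by
    intro x y z
    have h1 := CM12 y ε (x*z)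
    have h2 := CM12 x ε (y*z)
    rw [show x*(y*z) = y*(x*z) by ring] at h2
    linear_combination h1 - h2
  have P3 : ∀ y z : V,
      (nt ε (y*z) - (nt ε y)*z - y*(nt ε z)) + z*(nt y ε) - nt (y*z) ε + y*(nt z ε)
        = ⁅(1:V),ε⁆*y*z := by
    intro y z
    linear_combination TF ε (y*z) - z*(TF ε y) - y*(TF ε z) + LA y z
  have msr : ∀ (g : R) (A B : V), A*(g•B) = g•(A*B) := by
    intro g A B
    rw [mul_comm]
    have h : (g•B)*A = g•(B*A) := hF.smul_left g B A
    rw [h, mul_comm]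
  have msl : ∀ (g : R) (A B : V), (g•A)*B = g•(A*B) := fun g A B => hF.smul_left g A B
  -- the key identity for statement that nt is the second structure connection of the dual
  have hdag : ∀ Y : V, εinv*(nt Y ε) + nt (ε*Y) εinv - Y*(nt εinv ε) = 0 := by
    intro Y
    have ha := TF εinv (ε*Y)
    have hb := CMp εinv ε Y
    rw [H0] at hb
    have hd := TF εinv Y
    have hLIi := LI ε Y
    have hU1 := hUd Y
    have s1 : ⁅εinv,ε⁆ = -⁅ε,εinv⁆ := sk _ _
    apply halfz
    linear_combination (-2:ℤ)*ha + 2*hb + 2*ε*hd + (-2:ℤ)*hLIi - hU1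
      + (εinv*εinv*ε*Y)*Hee + (-Y)*s1 + ((ε*εinv+1)*⁅ε,εinv⁆*Y)*H0
      + 2*hU1 + (-(2*(ε*εinv+1)*⁅ε,εinv⁆*Y))*H0
  -- expansion of the covariant derivative of * wrt the second structure connection
  have CC : ∀ X Y Z : V, covMul (secondConn m ε εinv nt) (dualMul m εinv) X Y Z
      = ε*(nt (ε*(εinv*X)) ((εinv*Y)*(εinv*Z))) - (ε*(εinv*X))*(nt ((εinv*Y)*(εinv*Z)) ε)
        - ε*(εinv*Z)*(nt (ε*(εinv*X)) (εinv*Y)) + (ε*(εinv*X))*(εinv*Z)*(nt (εinv*Y) ε)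
        - ε*(εinv*Y)*(nt (ε*(εinv*X)) (εinv*Z)) + (ε*(εinv*X))*(εinv*Y)*(nt (εinv*Z) ε) := by
    intro X Y Z
    show ε*(nt X (εinv*((Y*Z)*εinv))) - (nt (εinv*((Y*Z)*εinv)) ε)*X
        - ((ε*(nt X (εinv*Y)) - (nt (εinv*Y) ε)*X)*Z)*εinv
        - (Y*(ε*(nt X (εinv*Z)) - (nt (εinv*Z) ε)*X))*εinv = _
    rw [show εinv*((Y*Z)*εinv) = (εinv*Y)*(εinv*Z) by ring]
    rw [show nt X ((εinv*Y)*(εinv*Z)) = nt (ε*(εinv*X)) ((εinv*Y)*(εinv*Z)) by rw [hid]]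
    rw [show nt X (εinv*Y) = nt (ε*(εinv*X)) (εinv*Y) by rw [hid]]
    rw [show nt X (εinv*Z) = nt (ε*(εinv*X)) (εinv*Z) by rw [hid]]
    linear_combination (X*(nt ((εinv*Y)*(εinv*Z)) ε) - X*Z*εinv*(nt (εinv*Y) ε)
      - X*Y*εinv*(nt (εinv*Z) ε))*H0
  have Phisym : ∀ x y z : V,
      ε*(nt (ε*x) (y*z)) - (ε*x)*(nt (y*z) ε) - ε*z*(nt (ε*x) y) + (ε*x)*z*(nt y ε)
        - ε*y*(nt (ε*x) z) + (ε*x)*y*(nt z ε)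
      = ε*(nt (ε*y) (x*z)) - (ε*y)*(nt (x*z) ε) - ε*z*(nt (ε*y) x) + (ε*y)*z*(nt x ε)
        - ε*x*(nt (ε*y) z) + (ε*y)*x*(nt z ε) := by
    intro x y z
    have q1 := CMp y ε x
    have q2 := CM12 x y z
    linear_combination ε*(P1 x y z) - ε*(P1 y x z) + ε*(P2 x y z) - ε*z*q1 - ε*ε*q2
      + ε*x*(P3 y z) - ε*y*(P3 x z)
  -- conjunct 7, proved first since it is used in conjunct 2
  have hC7 : dualMul (dualMul m εinv) (m ε ε) = m := by
    funext X Y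
    show (((X*Y)*εinv)*(ε*ε))*εinv = X*Y
    linear_combination (X*Y*εinv*ε + X*Y)*H0
  refine ⟨hev.2, ⟨?_, ?_⟩, ⟨?_, ?_, ?_, ?_⟩, ?_, ?_, ?_, hC7, ?_⟩
  · -- dual of dual unit
    show ((1:V)*(ε*ε))*εinv = ε
    linear_combination ε*H0
  · -- the dual multiplication of the dual is an F-manifold structure
    rw [hC7]; exact hF
  · -- secondConn add_left
    intro X Y Z
    show ε*(nt (X+Y) (εinv*Z)) - (nt (εinv*Z) ε)*(X+Y)
        = (ε*(nt X (εinv*Z)) - (nt (εinv*Z) ε)*X) + (ε*(nt Y (εinv*Z)) - (nt (εinv*Z) ε)*Y)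
    linear_combination ε*(hc.add_left X Y (εinv*Z))
  · -- secondConn smul_left
    intro f X Y
    show ε*(nt (f•X) (εinv*Y)) - (nt (εinv*Y) ε)*(f•X)
        = f • (ε*(nt X (εinv*Y)) - (nt (εinv*Y) ε)*X)
    rw [hc.smul_left, msr f ε (nt X (εinv*Y)), msr f (nt (εinv*Y) ε) X, ← smul_sub]
  · -- secondConn add_right
    intro X Y Z
    show ε*(nt X (εinv*(Y+Z))) - (nt (εinv*(Y+Z)) ε)*X
        = (ε*(nt X (εinv*Y)) - (nt (εinv*Y) ε)*X) + (ε*(nt X (εinv*Z)) - (nt (εinv*Z) ε)*X)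
    rw [mul_add εinv Y Z, hc.add_right, hc.add_left]
    ring
  · -- secondConn leibniz
    intro X f Y
    show ε*(nt X (εinv*(f•Y))) - (nt (εinv*(f•Y)) ε)*X
        = S.deriv X f • Y + f • (ε*(nt X (εinv*Y)) - (nt (εinv*Y) ε)*X)
    rw [msr f εinv Y, hc.leibniz, hc.smul_left, mul_add, msr (S.deriv X f) ε (εinv*Y),
      msr f ε (nt X (εinv*Y)), hid Y, msl f (nt (εinv*Y) ε) X, smul_sub]
    abel
  · -- secondConn torsion-free
    intro X Y
    show (ε*(nt X (εinv*Y)) - (nt (εinv*Y) ε)*X) - (ε*(nt Y (εinv*X)) - (nt (εinv*X) ε)*Y)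
        = ⁅X,Y⁆
    have h1 := TF X (εinv*Y)
    have h2 := TF Y (εinv*X)
    have h3 := TF (εinv*Y) (εinv*X)
    have q := CMp (εinv*Y) ε (εinv*X)
    rw [hid X, hid Y] at q
    have D := Dlem (εinv*X) (εinv*Y)
    rw [hid X, hid Y] at D
    have s1 : ⁅Y, εinv*X⁆ = -⁅εinv*X, Y⁆ := sk _ _
    have s2 : ⁅εinv*Y, εinv*X⁆ = -⁅εinv*X, εinv*Y⁆ := sk _ _
    linear_combination ε*h1 - ε*h2 + ε*q + ε*ε*h3 - D + ε*ε*s2 - ε*s1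
      + ((nt (εinv*Y) ε)*X - (nt (εinv*X) ε)*Y)*H0
  · -- secondConn compatible with dual multiplication
    intro X Y Z
    constructor
    · rw [CC X Y Z, CC Y X Z]
      exact Phisym (εinv*X) (εinv*Y) (εinv*Z)
    · rw [CC X Y Z, CC X Z Y]
      have q3 := CM23 (ε*(εinv*X)) (εinv*Y) (εinv*Z)
      have r : nt ((εinv*Y)*(εinv*Z)) ε = nt ((εinv*Z)*(εinv*Y)) ε := by
        rw [mul_comm (εinv*Y) (εinv*Z)]
      linear_combination ε*q3 - (ε*(εinv*X))*r
  · -- the hU condition on the dual side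
    intro X
    show ε*(nt X (εinv*ε)) - (nt (εinv*ε) ε)*X = (2:ℚ)⁻¹ • ((⁅ε*ε,(1:V)⁆*X)*εinv)
    rw [H0']
    apply half
    have t := TF 1 ε
    have l := L1 ε ε
    have s4 : ⁅ε*ε,(1:V)⁆ = -⁅(1:V),ε*ε⁆ := sk _ _
    linear_combination ε*(hUd X) - (2:ℤ)*X*t - X*(hUd ε) + X*εinv*l - X*εinv*s4
      + 2*⁅(1:V),ε⁆*X*H0
  · -- nt is the second structure connection of the dual data
    funext X Y
    show ((1:V)*(ε*(nt X (εinv*(((ε*ε)*Y)*εinv))) - (nt (εinv*(((ε*ε)*Y)*εinv)) ε)*X))*εinv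
        - ((ε*(nt (((ε*ε)*Y)*εinv) (εinv*(1:V))) - (nt (εinv*(1:V)) ε)*(((ε*ε)*Y)*εinv))*X)*εinv
        = nt X Y
    have hW1 : εinv*(((ε*ε)*Y)*εinv) = Y := by linear_combination ((ε*εinv+1)*Y)*H0
    have hW2 : ((ε*ε)*Y)*εinv = ε*Y := by linear_combination (ε*Y)*H0
    rw [hW1, mul_one, hW2]
    have hd := hdag Y
    linear_combination (-X)*hd + (nt X Y - X*(nt (ε*Y) εinv) + X*Y*(nt εinv ε))*H0
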